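/- Let φ be an Orlicz function with φ(t) = t² for all 0 ≤ t ≤ a, and let m ∈ ℕ satisfy 1/m ≤ a². Consider the 3m-dimensional Orlicz space ℓ_φ^{3m} with Luxemburg norm, and let F = {x ∈ ℝ^{3m} : x₁ + x₂ + x₃ = 0 and x_k = x_{k+3j} for k = 1, 2, 3 and j = 1, …, m−1}. Then for every x ∈ F, ‖x‖_φ = ‖x‖_{ℓ₂}. -/

import Mathlib

lemma supadd_aux {φ : ℝ → ℝ} (hconv : ConvexOn ℝ (Set.Ici 0) φ) (h0 : φ 0 = 0)
    {t c : ℝ} (ht : 0 ≤ t) (hc : 1 ≤ c) : c * φ t ≤ φ (c * t) := by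
  have hc0 : 0 < c := lt_of_lt_of_le one_pos hc
  have hmem : c * t ∈ Set.Ici (0:ℝ) := mul_nonneg hc0.le ht
  have hb : (0:ℝ) ≤ 1 - 1/c := by
    have : 1/c ≤ 1 := by rw [div_le_one hc0]; exact hc
    linarith
  have h := hconv.2 hmem (Set.self_mem_Ici (a := (0:ℝ)))
    (by positivity : (0:ℝ) ≤ 1/c) hb (by field_simp; ring)
  simp only [smul_eq_mul, mul_zero, h0] at h
  have ht' : (1/c) * (c * t) + 0 = t := by field_simp; ring
  rw [ht'] at h
  have := mul_le_mul_of_nonneg_left h hc0.le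
  calc c * φ t ≤ c * (1/c * φ (c*t) + 0) := this
    _ = φ (c*t) := by field_simp; ring

/-- The Luxemburg norm on `ℝᴺ`. -/
noncomputable def luxNorm {N : ℕ} (φ : ℝ → ℝ) (x : Fin N → ℝ) : ℝ :=
  sInf {l : ℝ | 0 < l ∧ ∑ i, φ (|x i| / l) ≤ 1}

/-- If `φ(t) = t²` on `[0,a]` and `1/m ≤ a²`, then on the subspace `F` of
3-periodic vectors of `ℝ^{3m}` whose first three coordinates sum to zero,
the Luxemburg norm coincides with the Euclidean norm. -/
theorem stmt6 (φ : ℝ → ℝ) (hconv : ConvexOn ℝ (Set.Ici 0) φ)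
    (hmono : MonotoneOn φ (Set.Ici 0)) (h0 : φ 0 = 0) (h1 : φ 1 = 1)
    (a : ℝ) (ha : 0 < a) (hφ2 : ∀ t ∈ Set.Icc 0 a, φ t = t ^ 2)
    (m : ℕ) (hm : 0 < m) (hma : 1 / (m : ℝ) ≤ a ^ 2)
    (x : Fin (3 * m) → ℝ)
    (hper : ∀ i j : Fin (3 * m), (i : ℕ) % 3 = (j : ℕ) % 3 → x i = x j)
    (hsum : x ⟨0, by omega⟩ + x ⟨1, by omega⟩ + x ⟨2, by omega⟩ = 0) :
    luxNorm φ x = Real.sqrt (∑ i, (x i) ^ 2) := by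
  set S := ∑ i, (x i) ^ 2 with hS
  have hSnn : 0 ≤ S := Finset.sum_nonneg fun i _ => sq_nonneg _
  -- key coordinatewise bound
  have key : ∀ i : Fin (3 * m), (x i) ^ 2 * m ≤ S := by
    intro i
    have hr : (i : ℕ) % 3 < 3 := Nat.mod_lt _ (by norm_num)
    set f : Fin m → Fin (3 * m) := fun k => ⟨3 * (k : ℕ) + (i : ℕ) % 3, by omega⟩ with hf
    have hinj : Function.Injective f := by
      intro k k' h
      have h2 := congrArg Fin.val h
      simp only [hf] at h2
      exact Fin.ext (by omega)
    have hval : ∀ k : Fin m, x (f k) = x i := by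
      intro k
      apply hper
      simp only [hf]
      omega
    have h1' : ∑ k : Fin m, x (f k) ^ 2 = (x i) ^ 2 * m := by
      simp [hval, Finset.sum_const, mul_comm]
    have h2' : ∑ k : Fin m, x (f k) ^ 2 ≤ S := by
      have heq := Finset.sum_image (s := Finset.univ) (f := fun j => x j ^ 2)
        (g := f) (fun a _ b _ h => hinj h)
      calc ∑ k : Fin m, x (f k) ^ 2 = ∑ j ∈ Finset.univ.image f, x j ^ 2 := heq.symm
        _ ≤ S := Finset.sum_le_sum_of_subset_of_nonneg (Finset.subset_univ _)
            (fun j _ _ => sq_nonneg _)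
    linarith
  rcases eq_or_lt_of_le hSnn with hS0 | hSpos
  · -- x = 0
    have hx : ∀ i, x i = 0 := by
      intro i
      have := (Finset.sum_eq_zero_iff_of_nonneg (fun i _ => sq_nonneg (x i))).mp hS0.symm
      exact (pow_eq_zero_iff two_ne_zero).mp (this i (Finset.mem_univ i))
    have hset : {l : ℝ | 0 < l ∧ ∑ i, φ (|x i| / l) ≤ 1} = Set.Ioi 0 := by
      ext l
      simp only [Set.mem_setOf_eq, Set.mem_Ioi, hx, abs_zero, zero_div, h0,
        Finset.sum_const, smul_eq_mul, mul_zero]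
      constructor
      · exact fun h => h.1
      · exact fun h => ⟨h, by norm_num⟩
    rw [luxNorm, hset, csInf_Ioi, ← hS0, Real.sqrt_zero]
  · -- S > 0
    set E := Real.sqrt S with hE
    have hEpos : 0 < E := Real.sqrt_pos.mpr hSpos
    have hE2 : E ^ 2 = S := Real.sq_sqrt hSnn
    have hbound : ∀ i, |x i| / E ≤ a := by
      intro i
      rw [div_le_iff₀ hEpos]
      have h1' : (x i) ^ 2 ≤ a ^ 2 * E ^ 2 := by
        have hm' : (0:ℝ) < m := by exact_mod_cast hm
        have : (x i) ^ 2 ≤ S / m := by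
          rw [le_div_iff₀ hm']; exact key i
        have h2' : S / m ≤ a ^ 2 * S := by
          rw [div_le_iff₀ hm']
          calc S = 1 * S := (one_mul S).symm
            _ ≤ (a^2 * m) * S := by
                apply mul_le_mul_of_nonneg_right _ hSnn
                rw [div_le_iff₀ hm'] at hma; linarith
            _ = a ^ 2 * S * m := by ring
        rw [hE2]; linarith
      nlinarith [abs_nonneg (x i), sq_abs (x i), mul_pos ha hEpos]
    have hmemE : ∀ i, |x i| / E ∈ Set.Icc 0 a := fun i =>
      ⟨div_nonneg (abs_nonneg _) hEpos.le, hbound i⟩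
    have hsumE : ∑ i, φ (|x i| / E) = 1 := by
      have : ∀ i : Fin (3*m), φ (|x i| / E) = (x i)^2 / E^2 := by
        intro i
        rw [hφ2 _ (hmemE i), div_pow, sq_abs]
      rw [Finset.sum_congr rfl (fun i _ => this i), ← Finset.sum_div, ← hS, hE2,
        div_self (ne_of_gt hSpos)]
    have hEin : E ∈ {l : ℝ | 0 < l ∧ ∑ i, φ (|x i| / l) ≤ 1} :=
      ⟨hEpos, le_of_eq hsumE⟩
    have hlb : ∀ l ∈ {l : ℝ | 0 < l ∧ ∑ i, φ (|x i| / l) ≤ 1}, E ≤ l := by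
      rintro l ⟨hl, hle⟩
      by_contra hcon
      push_neg at hcon
      have hc : 1 ≤ E / l := by rw [le_div_iff₀ hl]; linarith
      have hterm : ∀ i : Fin (3*m), (E/l) * φ (|x i| / E) ≤ φ (|x i| / l) := by
        intro i
        have := supadd_aux hconv h0 (div_nonneg (abs_nonneg (x i)) hEpos.le) hc
        have heq : (E/l) * (|x i| / E) = |x i| / l := by
          field_simp
        rwa [heq] at this
      have : (E/l) * 1 ≤ ∑ i, φ (|x i| / l) := by
        rw [← hsumE, Finset.mul_sum]
        exact Finset.sum_le_sum fun i _ => hterm i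
      have : E / l ≤ 1 := by linarith
      rw [div_le_one hl] at this
      linarith
    rw [luxNorm]
    exact le_antisymm (csInf_le ⟨0, fun l hl => hl.1.le⟩ hEin) (le_csInf ⟨E, hEin⟩ hlb)
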